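/- arXiv:2409.01061 — 5 statements merged into one kernel-verified Lean document; each statement's English description precedes it below -/
import Mathlib

section
/- Let U ⊆ ℝⁿ be open, γ > 1/2, and f : U → ℝ a γ-Hölder continuous function. If x ∈ U, ν ∈ 𝕊ⁿ ⊆ ℝⁿ × ℝ, and s > 0 are such that the open ball B((x, f(x)) + s·ν, s) in ℝⁿ⁺¹ is disjoint from the graph {(y, f(y)) : y ∈ U}, then ν does not lie in ℝⁿ × {0}. -/
open Metric

/-- if the graph of a `γ`-Hölder function with `γ > 1/2` avoids an
open ball in `ℝⁿ × ℝ` touching the graph at `(x, f x)`, then the direction `ν`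
from the touching point to the center is not horizontal. -/
theorem stmt_0 (n : ℕ) (U : Set (EuclideanSpace ℝ (Fin n))) (hU : IsOpen U)
    (γ : ℝ) (hγ : 1 / 2 < γ) (f : EuclideanSpace ℝ (Fin n) → ℝ)
    (L : ℝ) (hL : 0 ≤ L)
    (hHolder : ∀ x ∈ U, ∀ y ∈ U, |f x - f y| ≤ L * dist x y ^ γ)
    (x : EuclideanSpace ℝ (Fin n)) (hx : x ∈ U)
    (ν : WithLp 2 (EuclideanSpace ℝ (Fin n) × ℝ)) (hν : ‖ν‖ = 1)
    (s : ℝ) (hs : 0 < s)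
    (hball : ∀ y ∈ U,
      s ≤ dist ((WithLp.equiv 2 (EuclideanSpace ℝ (Fin n) × ℝ)).symm (y, f y))
        ((WithLp.equiv 2 (EuclideanSpace ℝ (Fin n) × ℝ)).symm (x, f x) + s • ν)) :
    ((WithLp.equiv 2 (EuclideanSpace ℝ (Fin n) × ℝ)) ν).2 ≠ 0 := by
  intro h2
  set ν₁ : EuclideanSpace ℝ (Fin n) :=
    ((WithLp.equiv 2 (EuclideanSpace ℝ (Fin n) × ℝ)) ν).1 with hν₁def
  have hν1norm : ‖ν₁‖ = 1 := by
    have h := WithLp.prod_norm_sq_eq_of_L2 ν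
    rw [hν] at h
    have hfst : ν.fst = ν₁ := rfl
    have hsnd : ν.snd = ((WithLp.equiv 2 (EuclideanSpace ℝ (Fin n) × ℝ)) ν).2 := rfl
    rw [hfst, hsnd, h2] at h
    simp at h
    nlinarith [norm_nonneg ν₁]
  obtain ⟨δ, hδ, hballU⟩ := Metric.isOpen_iff.mp hU x hx
  set β : ℝ := 2 * γ - 1 with hβdef
  have hβ : 0 < β := by rw [hβdef]; linarith
  set M : ℝ := L ^ 2 + 1 with hMdef
  have hM : (0:ℝ) < M := by positivity
  set t : ℝ := min (δ / 2) (min (s / 2) ((s / M) ^ (1 / β))) with htdef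
  have ht : 0 < t := by
    apply lt_min (by linarith)
    apply lt_min (by linarith)
    exact Real.rpow_pos_of_pos (by positivity) _
  have hts : t ≤ s / 2 := (min_le_right _ _).trans (min_le_left _ _)
  set y : EuclideanSpace ℝ (Fin n) := x + t • ν₁ with hydef
  have hdxy : dist x y = t := by
    rw [hydef, dist_eq_norm]
    simp [norm_smul, abs_of_pos ht, hν1norm]
  have hyU : y ∈ U := by
    apply hballU
    rw [mem_ball, dist_comm, hdxy]
    calc t ≤ δ / 2 := min_le_left _ _
      _ < δ := by linarith
  have hkey := hball y hyU
  have hc : (WithLp.equiv 2 (EuclideanSpace ℝ (Fin n) × ℝ)).symm (x, f x) + s • ν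
      = (WithLp.equiv 2 (EuclideanSpace ℝ (Fin n) × ℝ)).symm (x + s • ν₁, f x) := by
    have hp : (x + s • ν₁, f x)
        = (x, f x) + s • ((WithLp.equiv 2 (EuclideanSpace ℝ (Fin n) × ℝ)) ν) := by
      rw [Prod.ext_iff]
      constructor
      · rfl
      · simp [Prod.smul_snd, h2]
        exact Or.inr h2
    rw [hp]; rfl
  rw [hc] at hkey
  have hdist : dist ((WithLp.equiv 2 (EuclideanSpace ℝ (Fin n) × ℝ)).symm (y, f y))
      ((WithLp.equiv 2 (EuclideanSpace ℝ (Fin n) × ℝ)).symm (x + s • ν₁, f x))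
      = Real.sqrt ((s - t) ^ 2 + (f y - f x) ^ 2) := by
    rw [WithLp.prod_dist_eq_of_L2]
    congr 2
    · rw [show ((WithLp.equiv 2 (EuclideanSpace ℝ (Fin n) × ℝ)).symm (y, f y)).fst = y from rfl,
        show ((WithLp.equiv 2 (EuclideanSpace ℝ (Fin n) × ℝ)).symm
          (x + s • ν₁, f x)).fst = x + s • ν₁ from rfl,
        dist_eq_norm, hydef]
      have he : x + t • ν₁ - (x + s • ν₁) = (t - s) • ν₁ := by module
      rw [he, norm_smul, hν1norm, mul_one, Real.norm_eq_abs,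
        abs_of_nonpos (by linarith)]
      ring_nf
    · rw [show ((WithLp.equiv 2 (EuclideanSpace ℝ (Fin n) × ℝ)).symm (y, f y)).snd = f y from rfl,
        show ((WithLp.equiv 2 (EuclideanSpace ℝ (Fin n) × ℝ)).symm
          (x + s • ν₁, f x)).snd = f x from rfl,
        Real.dist_eq, sq_abs]
  rw [hdist] at hkey
  have hsq : s ^ 2 ≤ (s - t) ^ 2 + (f y - f x) ^ 2 := (Real.le_sqrt hs.le (by positivity)).mp hkey
  have hH := hHolder y hyU x hx
  rw [dist_comm, hdxy] at hH
  have hfy2 : (f y - f x) ^ 2 ≤ L ^ 2 * t ^ (1 + β) := by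
    have h2' : (f y - f x) ^ 2 ≤ (L * t ^ γ) ^ 2 := by
      rw [← sq_abs]
      exact pow_le_pow_left₀ (abs_nonneg _) hH 2
    have hgg : t ^ γ * t ^ γ = t ^ (1 + β) := by
      rw [← Real.rpow_add ht]
      congr 1
      rw [hβdef]; ring
    have h3 : (L * t ^ γ) ^ 2 = L ^ 2 * t ^ (1 + β) := by
      rw [mul_pow, sq (t ^ γ), hgg]
    linarith [h3 ▸ h2']
  have htβ : t ^ β ≤ s / M := by
    have hb : t ≤ (s / M) ^ (1 / β) := (min_le_right _ _).trans (min_le_right _ _)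
    calc t ^ β ≤ ((s / M) ^ (1 / β)) ^ β := Real.rpow_le_rpow ht.le hb hβ.le
      _ = s / M := by
          rw [← Real.rpow_mul (by positivity), one_div_mul_cancel hβ.ne', Real.rpow_one]
  have ht1β : t ^ (1 + β) = t * t ^ β := by
    rw [Real.rpow_add ht, Real.rpow_one]
  have hLM : L ^ 2 ≤ M := by rw [hMdef]; linarith
  have h5 : L ^ 2 * t ^ (1 + β) ≤ t * s := by
    rw [ht1β]
    calc L ^ 2 * (t * t ^ β) ≤ M * (t * t ^ β) := by
          apply mul_le_mul_of_nonneg_right hLM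
          positivity
      _ = t * (M * t ^ β) := by ring
      _ ≤ t * (M * (s / M)) := by
          apply mul_le_mul_of_nonneg_left _ ht.le
          exact mul_le_mul_of_nonneg_left htβ hM.le
      _ = t * s := by field_simp
  nlinarith [hsq, hfy2, h5, hts, ht, hs]
end

section
/- Let μ be a measure on a set X, C > 0 a constant, and {E_j : j ∈ S} a countable family of μ-measurable sets such that for every i ∈ S, the number of j ∈ S with E_j ∩ E_i ≠ ∅ is at most C. Then Σ_{i ∈ S} μ(E_i) ≤ C · μ(⋃_{i ∈ S} E_i). -/
open MeasureTheory
open scoped ENNReal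

/-- bounded-overlap countable families of measurable sets. -/
theorem stmt_1 {X ι : Type*} [MeasurableSpace X] (μ : Measure X)
    (C : ℕ) (hC : 0 < C) (S : Set ι) (hS : S.Countable)
    (E : ι → Set X) (hE : ∀ i ∈ S, MeasurableSet (E i))
    (hover : ∀ i ∈ S, Set.encard {j | j ∈ S ∧ (E j ∩ E i).Nonempty} ≤ (C : ℕ∞)) :
    ∑' i : S, μ (E i) ≤ (C : ℝ≥0∞) * μ (⋃ i ∈ S, E i) := by
  have hmeas : ∀ i : S, MeasurableSet (E (i : ι)) := fun i => hE i i.2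
  have hU : MeasurableSet (⋃ i ∈ S, E i) := MeasurableSet.biUnion hS hE
  have key : ∀ x : X, (∑' i : S, (E (i : ι)).indicator (1 : X → ℝ≥0∞) x)
      ≤ (⋃ i ∈ S, E i).indicator (fun _ => (C : ℝ≥0∞)) x := by
    intro x
    by_cases hx : x ∈ ⋃ i ∈ S, E i
    · rw [Set.indicator_of_mem hx]
      obtain ⟨i₀, hi₀S, hxi₀⟩ := Set.mem_iUnion₂.1 hx
      set T : Set ι := {j | j ∈ S ∧ x ∈ E j} with hT
      have h1 : (∑' i : S, (E (i : ι)).indicator (1 : X → ℝ≥0∞) x)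
          = ∑' i : ι, T.indicator (1 : ι → ℝ≥0∞) i := by
        rw [tsum_subtype S (fun j => (E j).indicator (1 : X → ℝ≥0∞) x)]
        congr 1
        funext i
        by_cases hiS : i ∈ S
        · by_cases hxi : x ∈ E i
          · rw [Set.indicator_of_mem hiS, Set.indicator_of_mem hxi,
              Set.indicator_of_mem (show i ∈ T from ⟨hiS, hxi⟩)]
            rfl
          · rw [Set.indicator_of_mem hiS, Set.indicator_of_notMem hxi,
              Set.indicator_of_notMem (show i ∉ T from fun h => hxi h.2)]
        · rw [Set.indicator_of_notMem hiS,
            Set.indicator_of_notMem (show i ∉ T from fun h => hiS h.1)]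
      rw [h1, ← tsum_subtype T (1 : ι → ℝ≥0∞)]
      rw [show (∑' i : T, (1 : ι → ℝ≥0∞) (i : ι)) = ∑' _ : T, (1 : ℝ≥0∞) from rfl,
        ENNReal.tsum_set_one]
      have hsub : T ⊆ {j | j ∈ S ∧ (E j ∩ E i₀).Nonempty} := by
        rintro j ⟨hjS, hxj⟩
        exact ⟨hjS, ⟨x, hxj, hxi₀⟩⟩
      have hle : T.encard ≤ (C : ℕ∞) :=
        le_trans (Set.encard_mono hsub) (hover i₀ hi₀S)
      calc (T.encard : ℝ≥0∞) ≤ ((C : ℕ∞) : ℝ≥0∞) := by exact_mod_cast hle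
        _ = (C : ℝ≥0∞) := by simp
    · rw [Set.indicator_of_notMem hx]
      have : ∀ i : S, (E (i : ι)).indicator (1 : X → ℝ≥0∞) x = 0 := by
        intro i
        apply Set.indicator_of_notMem
        exact fun h => hx (Set.mem_iUnion₂.2 ⟨i, i.2, h⟩)
      simp [this]
  calc ∑' i : S, μ (E (i : ι))
      = ∑' i : S, ∫⁻ x, (E (i : ι)).indicator (1 : X → ℝ≥0∞) x ∂μ := by
        congr 1; funext i
        rw [lintegral_indicator (hmeas i)]; simp
    _ = ∫⁻ x, ∑' i : S, (E (i : ι)).indicator (1 : X → ℝ≥0∞) x ∂μ :=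
        (by
          have := hS.to_subtype
          exact (lintegral_tsum fun i => (measurable_one.indicator (hmeas i)).aemeasurable).symm)
    _ ≤ ∫⁻ x, (⋃ i ∈ S, E i).indicator (fun _ => (C : ℝ≥0∞)) x ∂μ :=
        lintegral_mono key
    _ = (C : ℝ≥0∞) * μ (⋃ i ∈ S, E i) := by
        rw [lintegral_indicator hU]; simp [mul_comm]
end

section
/- Let α ∈ 𝒟¹(ℝ^{n+1} × ℝ^{n+1}) be the contact 1-form defined by ⟨(y,v), α(x,u)⟩ = y • u. For k ∈ {0,…,n}, let φ_k be the k-th Lipschitz-Killing n-form defined by ⟨ξ₁ ∧ … ∧ ξₙ, φ_k(x,u)⟩ = Σ_{σ ∈ Σ_{n,k}} ⟨π_{σ(1)}(ξ₁) ∧ … ∧ π_{σ(n)}(ξₙ) ∧ u, E'⟩, where Σ_{n,k} = {σ : {1,…,n} → {0,1} : Σᵢ σ(i) = n − k}, π₀(x,u) = x, π₁(x,u) = u. Then for every (x,u) ∈ ℝ^{n+1} × 𝕊ⁿ and every ξ₁,…,ξ_{n+1} tangent to ℝ^{n+1} × 𝕊ⁿ at (x,u): ⟨ξ₁∧…∧ξ_{n+1},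 dφ_k(x,u)⟩ = (n−k+1)⟨ξ₁∧…∧ξ_{n+1}, α(x,u) ∧ φ_{k−1}(x,u)⟩ for k = 1,…,n, and ⟨ξ₁∧…∧ξ_{n+1}, dφ₀(x,u)⟩ = 0. -/
open scoped RealInnerProductSpace BigOperators

noncomputable section

/-- The determinant pairing `⟨v₁ ∧ … ∧ v_{n+1}, E'⟩` with the standard dual
volume covector of `ℝ^{n+1}`. -/
def detPairLK (n : ℕ) (v : Fin (n + 1) → EuclideanSpace ℝ (Fin (n + 1))) : ℝ :=
  ((EuclideanSpace.basisFun (Fin (n + 1)) ℝ).toBasis.det) v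

/-- The `k`-th Lipschitz–Killing `n`-form of `ℝ^{n+1}`, evaluated at the point
`p = (x,u)` on the `n` tangent vectors `ξ`:
`⟨ξ₁ ∧ … ∧ ξₙ, φ_k(x,u)⟩ = Σ_{σ ∈ Σ_{n,k}} ⟨π_{σ(1)}ξ₁ ∧ … ∧ π_{σ(n)}ξₙ ∧ u, E'⟩`. -/
def LKform (n k : ℕ)
    (p : EuclideanSpace ℝ (Fin (n + 1)) × EuclideanSpace ℝ (Fin (n + 1)))
    (ξ : Fin n → EuclideanSpace ℝ (Fin (n + 1)) × EuclideanSpace ℝ (Fin (n + 1))) : ℝ :=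
  ∑ σ ∈ Finset.univ.filter (fun σ : Fin n → Fin 2 => ∑ i, (σ i : ℕ) = n - k),
    detPairLK n (Fin.snoc (fun i => if σ i = 0 then (ξ i).1 else (ξ i).2) p.2)

/-- The exterior derivative of the `k`-th Lipschitz–Killing form, evaluated at
`p` on `n+1` vectors via the alternating-sum formula. -/
def LKd (n k : ℕ)
    (p : EuclideanSpace ℝ (Fin (n + 1)) × EuclideanSpace ℝ (Fin (n + 1)))
    (ξ : Fin (n + 1) → EuclideanSpace ℝ (Fin (n + 1)) × EuclideanSpace ℝ (Fin (n + 1))) : ℝ :=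
  ∑ j : Fin (n + 1), (-1 : ℝ) ^ (j : ℕ) *
    fderiv ℝ (fun q => LKform n k q (fun i => ξ (j.succAbove i))) p (ξ j)

namespace Stmt11Aux

open Finset

abbrev EV (n : ℕ) := EuclideanSpace ℝ (Fin (n + 1))

variable {n : ℕ}

lemma detPairLK_eq_zero_of_orth {u : EV n} (hu : ‖u‖ = 1) (f : Fin (n + 1) → EV n)
    (hf : ∀ i, ⟪f i, u⟫ = 0) : detPairLK n f = 0 := by
  have hu0 : u ≠ 0 := by
    intro h; rw [h, norm_zero] at hu; exact one_ne_zero hu.symm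
  haveI : Fact (Module.finrank ℝ (EV n) = n + 1) := ⟨by simp⟩
  apply AlternatingMap.map_linearDependent
  intro hli
  set W := (ℝ ∙ u)ᗮ with hW
  have hmem : ∀ i, f i ∈ W := by
    intro i
    rw [hW, Submodule.mem_orthogonal_singleton_iff_inner_left]
    rw [real_inner_comm]
    rw [real_inner_comm]; exact hf i
  have hg : LinearIndependent ℝ (fun i => (⟨f i, hmem i⟩ : W)) := by
    apply LinearIndependent.of_comp W.subtype
    exact hli
  have hcard := hg.fintype_card_le_finrank
  have hfr : Module.finrank ℝ W = n := Submodule.finrank_orthogonal_span_singleton hu0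
  rw [hfr] at hcard
  simp at hcard

lemma detPairLK_expand {u : EV n} (hu : ‖u‖ = 1) (S : Finset (Fin (n + 1))) :
    ∀ f : Fin (n + 1) → EV n, (∀ i ∉ S, ⟪f i, u⟫ = 0) →
      detPairLK n f = ∑ m ∈ S, ⟪f m, u⟫ * detPairLK n (Function.update f m u) := by
  classical
  induction S using Finset.induction with
  | empty =>
      intro f hf
      simpa using detPairLK_eq_zero_of_orth hu f (fun i => hf i (by simp))
  | insert a S' ha ih =>
      intro f hf
      set c := ⟪f a, u⟫ with hc
      set t := f a - c • u with ht
      have huu : ⟪u, u⟫ = (1 : ℝ) := by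
        rw [real_inner_self_eq_norm_sq, hu]; norm_num
      have htu : ⟪t, u⟫ = 0 := by
        rw [ht, inner_sub_left, real_inner_smul_left, huu, hc]; ring
      have hfa : f a = t + c • u := by rw [ht]; abel
      have hdet : detPairLK n f
          = detPairLK n (Function.update f a t) + c * detPairLK n (Function.update f a u) := by
        have h1 : f = Function.update f a (t + c • u) := by
          rw [← hfa, Function.update_eq_self]
        unfold detPairLK
        conv_lhs => rw [h1]
        rw [AlternatingMap.map_update_add, AlternatingMap.map_update_smul, smul_eq_mul]
      have hft : ∀ i ∉ S', ⟪Function.update f a t i, u⟫ = 0 := by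
        intro i hi
        rcases eq_or_ne i a with rfl | hia
        · rw [Function.update_self]; exact htu
        · rw [Function.update_of_ne hia]
          exact hf i (by simp [hia, hi])
      rw [hdet, ih _ hft, Finset.sum_insert ha, ← hc]
      have hcongr : ∀ m ∈ S', ⟪Function.update f a t m, u⟫
            * detPairLK n (Function.update (Function.update f a t) m u)
          = ⟪f m, u⟫ * detPairLK n (Function.update f m u) := by
        intro m hm
        have hma : m ≠ a := by rintro rfl; exact ha hm
        rw [Function.update_of_ne hma]
        congr 1
        have hcomm : Function.update (Function.update f a t) m u
            = Function.update (Function.update f m u) a t :=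
          Function.update_comm hma.symm t u f
        rw [hcomm]
        set g := Function.update f m u with hg
        have hga : g a = t + c • u := by
          rw [hg, Function.update_of_ne hma.symm, hfa]
        have h3 : detPairLK n g = detPairLK n (Function.update g a t)
            + c * detPairLK n (Function.update g a u) := by
          have hgg : g = Function.update g a (t + c • u) := by
            rw [← hga, Function.update_eq_self]
          unfold detPairLK
          conv_lhs => rw [hgg]
          rw [AlternatingMap.map_update_add, AlternatingMap.map_update_smul, smul_eq_mul]
        have h4 : detPairLK n (Function.update g a u) = 0 := by
          unfold detPairLK
          exact AlternatingMap.map_eq_zero_of_eq _ _ (i := a) (j := m)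
            (by rw [Function.update_self, Function.update_of_ne hma, hg, Function.update_self])
            hma.symm
        rw [h3, h4]
        ring
      rw [Finset.sum_congr rfl hcongr]
      ring

/-- The permutation of `Fin (n+1)` sending `castSucc i ↦ succAbove j i` and `last ↦ j`. -/
def cyc (j : Fin (n + 1)) : Equiv.Perm (Fin (n + 1)) :=
  (finRotate (n + 1)).trans (Fin.cycleRange j).symm

lemma cyc_castSucc (j : Fin (n + 1)) (i : Fin n) :
    cyc j (Fin.castSucc i) = j.succAbove i := by
  have h1 : finRotate (n + 1) (Fin.castSucc i) = i.succ := by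
    rw [finRotate_succ_apply, Fin.coeSucc_eq_succ]
  simp [cyc, h1]

lemma cyc_last (j : Fin (n + 1)) : cyc j (Fin.last n) = j := by
  simp [cyc, finRotate_last]

lemma detPairLK_comp_cyc (j : Fin (n + 1)) (G : Fin (n + 1) → EV n) :
    detPairLK n (G ∘ cyc j) = ((-1 : ℝ) ^ (n + (j : ℕ))) * detPairLK n G := by
  unfold detPairLK
  rw [AlternatingMap.map_perm]
  have hs : Equiv.Perm.sign (cyc j) = (-1 : ℤˣ) ^ (n + (j : ℕ)) := by
    have : (cyc j : Equiv.Perm (Fin (n+1))) = (Fin.cycleRange j).symm * (finRotate (n + 1)) := rfl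
    rw [this, Equiv.Perm.sign_mul, Equiv.Perm.sign_symm, Fin.sign_cycleRange, sign_finRotate, Nat.add_sub_cancel,
      pow_add]
    rw [mul_comm]
  rw [hs]
  simp only [Units.smul_def, Units.val_pow_eq_pow_val, Units.val_neg, Units.val_one,
    zsmul_eq_mul]
  push_cast
  ring

lemma fderiv_LKform (k : ℕ) (ξ' : Fin n → EV n × EV n) (p w : EV n × EV n) :
    fderiv ℝ (fun q => LKform n k q ξ') p w = LKform n k w ξ' := by
  have hl : IsLinearMap ℝ (fun q : EV n × EV n => LKform n k q ξ') := by
    constructor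
    · intro q q'
      unfold LKform
      rw [← Finset.sum_add_distrib]
      refine Finset.sum_congr rfl (fun σ _ => ?_)
      have h1 : (q + q').2 = q.2 + q'.2 := rfl
      unfold detPairLK
      rw [h1, ← Fin.update_snoc_last (x := q.2), AlternatingMap.map_update_add,
        Fin.update_snoc_last, Fin.update_snoc_last]
    · intro c q
      unfold LKform
      rw [smul_eq_mul, Finset.mul_sum]
      refine Finset.sum_congr rfl (fun σ _ => ?_)
      have h1 : (c • q).2 = c • q.2 := rfl
      unfold detPairLK
      rw [h1, ← Fin.update_snoc_last (x := q.2), AlternatingMap.map_update_smul,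
        Fin.update_snoc_last, smul_eq_mul]
  let L : (EV n × EV n) →ₗ[ℝ] ℝ := hl.mk' _
  have hL : HasFDerivAt (fun q => LKform n k q ξ') (LinearMap.toContinuousLinearMap L) p :=
    (LinearMap.toContinuousLinearMap L).hasFDerivAt
  rw [hL.fderiv]
  rfl

lemma sum_insertNth_val (j : Fin (n + 1)) (b : Fin 2) (σ : Fin n → Fin 2) :
    ∑ l, ((j.insertNth (α := fun _ => Fin 2) b σ) l : ℕ) = (b : ℕ) + ∑ i, (σ i : ℕ) := by
  rw [Fin.sum_univ_succAbove (fun l => ((j.insertNth (α := fun _ => Fin 2) b σ) l : ℕ)) j]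
  simp

lemma reindex (b : Fin 2) (d : ℕ) (W : (Fin (n + 1) → Fin 2) → Fin (n + 1) → ℝ) :
    ∑ j : Fin (n + 1), ∑ σ ∈ univ.filter (fun σ : Fin n → Fin 2 => ∑ i, (σ i : ℕ) = d),
      W (j.insertNth b σ) j
    = ∑ τ ∈ univ.filter (fun τ : Fin (n + 1) → Fin 2 => ∑ l, (τ l : ℕ) = d + (b : ℕ)),
        ∑ j ∈ univ.filter (fun j => τ j = b), W τ j := by
  classical
  have hrhs : ∀ τ : Fin (n + 1) → Fin 2,
      ∑ j ∈ univ.filter (fun j => τ j = b), W τ j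
        = ∑ j : Fin (n + 1), if τ j = b then W τ j else 0 := by
    intro τ; rw [Finset.sum_filter]
  rw [Finset.sum_congr rfl (fun τ _ => hrhs τ)]
  rw [Finset.sum_comm (s := univ.filter (fun τ : Fin (n + 1) → Fin 2 => ∑ l, (τ l : ℕ) = d + (b : ℕ)))
    (t := univ) (f := fun τ j => if τ j = b then W τ j else 0)]
  refine Finset.sum_congr rfl (fun j _ => ?_)
  rw [← Finset.sum_filter, Finset.filter_filter]
  refine Finset.sum_nbij' (fun σ => j.insertNth b σ) (fun τ i => τ (j.succAbove i))
    ?_ ?_ ?_ ?_ ?_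
  · intro σ hσ
    simp only [mem_filter, mem_univ, true_and] at hσ ⊢
    refine ⟨by rw [sum_insertNth_val, hσ, Nat.add_comm], by simp⟩
  · intro τ hτ
    simp only [mem_filter, mem_univ, true_and] at hτ ⊢
    obtain ⟨hsum, hjb⟩ := hτ
    rw [Fin.sum_univ_succAbove (fun l => ((τ l : ℕ))) j, hjb] at hsum
    omega
  · intro σ _
    funext i
    simp
  · intro τ hτ
    simp only [mem_filter, mem_univ, true_and] at hτ
    have := Fin.insertNth_self_removeNth j τ
    rw [← hτ.2]
    exact this
  · intro σ _
    rfl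

/-- The canonical family `F τ m`: `u` in slot `m`, else first/second component
of `ξ l` according to `τ l`. -/
def Fm (ξ : Fin (n + 1) → EV n × EV n) (u : EV n) (τ : Fin (n + 1) → Fin 2)
    (m : Fin (n + 1)) : Fin (n + 1) → EV n :=
  fun l => if l = m then u else if τ l = 0 then (ξ l).1 else (ξ l).2

def Ym (ξ : Fin (n + 1) → EV n × EV n) (u : EV n) (τ : Fin (n + 1) → Fin 2) : ℝ :=
  ∑ m ∈ univ.filter (fun m => τ m = 0), ⟪(ξ m).1, u⟫ * detPairLK n (Fm ξ u τ m)

lemma rhs_det (ξ : Fin (n + 1) → EV n × EV n) (u : EV n) (j : Fin (n + 1))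
    (σ : Fin n → Fin 2) :
    detPairLK n (Fin.snoc (fun i => if σ i = 0 then (ξ (j.succAbove i)).1
        else (ξ (j.succAbove i)).2) u)
      = ((-1 : ℝ) ^ (n + (j : ℕ))) * detPairLK n (Fm ξ u (j.insertNth 0 σ) j) := by
  rw [← detPairLK_comp_cyc j]
  congr 1
  funext l
  refine Fin.lastCases ?_ (fun i => ?_) l
  · rw [Fin.snoc_last, Function.comp_apply, cyc_last, Fm, if_pos rfl]
  · rw [Fin.snoc_castSucc, Function.comp_apply, cyc_castSucc, Fm]
    rw [if_neg (Fin.succAbove_ne j i), Fin.insertNth_apply_succAbove]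

lemma lhs_det {ξ : Fin (n + 1) → EV n × EV n} {u : EV n} (hu : ‖u‖ = 1)
    (hξ : ∀ l, ⟪(ξ l).2, u⟫ = 0) (j : Fin (n + 1)) (σ : Fin n → Fin 2) :
    detPairLK n (Fin.snoc (fun i => if σ i = 0 then (ξ (j.succAbove i)).1
        else (ξ (j.succAbove i)).2) ((ξ j).2))
      = ((-1 : ℝ) ^ (n + (j : ℕ))) * Ym ξ u (j.insertNth 1 σ) := by
  classical
  set τ := j.insertNth (α := fun _ => Fin 2) 1 σ with hτ
  set f : Fin (n + 1) → EV n := Fin.snoc (fun i => if σ i = 0 then (ξ (j.succAbove i)).1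
      else (ξ (j.succAbove i)).2) ((ξ j).2) with hfdef
  have hf : ∀ l ∉ (univ.filter (fun i => σ i = 0)).image Fin.castSucc, ⟪f l, u⟫ = 0 := by
    intro l hl
    refine Fin.lastCases ?_ (fun i => ?_) l hl
    · intro _
      rw [hfdef, Fin.snoc_last]; exact hξ j
    · intro hi
      have hσi : ¬ σ i = 0 := by
        intro h
        exact hi (Finset.mem_image_of_mem _ (by simp [h]))
      rw [hfdef, Fin.snoc_castSucc, if_neg hσi]
      exact hξ _
  rw [detPairLK_expand hu _ f hf]
  rw [Finset.sum_image (fun a _ b _ h => Fin.castSucc_injective n h)]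
  have hterm : ∀ i ∈ univ.filter (fun i => σ i = 0),
      ⟪f (Fin.castSucc i), u⟫ * detPairLK n (Function.update f (Fin.castSucc i) u)
      = ((-1 : ℝ) ^ (n + (j : ℕ))) *
        (⟪(ξ (j.succAbove i)).1, u⟫ * detPairLK n (Fm ξ u τ (j.succAbove i))) := by
    intro i hi
    have hσi : σ i = 0 := by simpa using hi
    have h1 : ⟪f (Fin.castSucc i), u⟫ = ⟪(ξ (j.succAbove i)).1, u⟫ := by
      rw [hfdef, Fin.snoc_castSucc, if_pos hσi]
    have h2 : Function.update f (Fin.castSucc i) u = (Fm ξ u τ (j.succAbove i)) ∘ cyc j := by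
      funext l
      refine Fin.lastCases ?_ (fun i' => ?_) l
      · have hne : Fin.last n ≠ Fin.castSucc i := (Fin.castSucc_lt_last i).ne'
        rw [Function.update_of_ne hne, hfdef, Fin.snoc_last, Function.comp_apply, cyc_last,
          Fm, if_neg (Fin.succAbove_ne j i).symm]
        have : τ j = 1 := by
          rw [hτ]; exact Fin.insertNth_apply_same (α := fun _ => Fin 2) j 1 σ
        rw [this]
        norm_num
      · rw [Function.comp_apply, cyc_castSucc, Fm]
        rcases eq_or_ne i' i with rfl | hne
        · rw [Function.update_self, if_pos rfl]
        · have hcs : Fin.castSucc i' ≠ Fin.castSucc i := by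
            simpa using hne
          have h3 : τ (j.succAbove i') = σ i' := by
            rw [hτ]; exact Fin.insertNth_apply_succAbove (α := fun _ => Fin 2) j 1 σ i'
          have hne2 : j.succAbove i' ≠ j.succAbove i :=
            fun h => hne (Fin.succAbove_right_injective (p := j) h)
          rw [Function.update_of_ne hcs, hfdef, Fin.snoc_castSucc, if_neg hne2, h3]
    rw [h1, h2, detPairLK_comp_cyc]
    ring
  rw [Finset.sum_congr rfl hterm, ← Finset.mul_sum]
  congr 1
  rw [Ym]
  refine Finset.sum_bij (fun i _ => j.succAbove i) ?_ ?_ ?_ ?_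
  · intro i hi
    simp only [mem_filter, mem_univ, true_and] at hi ⊢
    rw [hτ, Fin.insertNth_apply_succAbove (α := fun _ => Fin 2)]; exact hi
  · intro a ha b hb h
    exact Fin.succAbove_right_injective (p := j) h
  · intro m hm
    simp only [mem_filter, mem_univ, true_and] at hm
    have hmj : m ≠ j := by
      intro h
      rw [h, hτ, Fin.insertNth_apply_same (α := fun _ => Fin 2)] at hm
      exact one_ne_zero hm
    obtain ⟨i, hi⟩ := Fin.exists_succAbove_eq hmj
    refine ⟨i, ?_, hi⟩
    simp only [mem_filter, mem_univ, true_and]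
    have := hm
    rw [← hi, hτ, Fin.insertNth_apply_succAbove (α := fun _ => Fin 2)] at this
    exact this
  · intro i hi
    rfl

lemma card_ones {τ : Fin (n + 1) → Fin 2} {e : ℕ} (h : ∑ l, (τ l : ℕ) = e) :
    (univ.filter (fun j => τ j = 1)).card = e := by
  have h2 : ∀ a : Fin 2, (a : ℕ) = if a = 1 then 1 else 0 := by decide
  rw [← h, Finset.card_filter]
  exact Finset.sum_congr rfl (fun l _ => (h2 (τ l)).symm)

end Stmt11Aux

/-- for `(x,u) ∈ ℝ^{n+1} × 𝕊ⁿ` and tangent vectors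
`ξ₁,…,ξ_{n+1}` to `ℝ^{n+1} × 𝕊ⁿ`, one has
`dφ_k = (n−k+1) α ∧ φ_{k−1}` (`k = 1,…,n`) and `dφ₀ = 0`, where `α` is the
contact `1`-form `⟨(y,v), α(x,u)⟩ = y • u`. -/
theorem stmt_11 (n : ℕ)
    (p : EuclideanSpace ℝ (Fin (n + 1)) × EuclideanSpace ℝ (Fin (n + 1)))
    (hp : ‖p.2‖ = 1)
    (ξ : Fin (n + 1) → EuclideanSpace ℝ (Fin (n + 1)) × EuclideanSpace ℝ (Fin (n + 1)))
    (hξ : ∀ j, ⟪(ξ j).2, p.2⟫ = 0) :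
    (∀ k : ℕ, 1 ≤ k → k ≤ n →
      LKd n k p ξ = ((n - k + 1 : ℕ) : ℝ) *
        ∑ j : Fin (n + 1), (-1 : ℝ) ^ (j : ℕ) * ⟪(ξ j).1, p.2⟫ *
          LKform n (k - 1) p (fun i => ξ (j.succAbove i))) ∧
    LKd n 0 p ξ = 0 := by
  classical
  open Finset Stmt11Aux in
  constructor
  · intro k hk1 hk2
    have hsq : ∀ j : Fin (n + 1), (-1 : ℝ) ^ (j : ℕ) * (-1 : ℝ) ^ (n + (j : ℕ)) = (-1 : ℝ) ^ n := by
      intro j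
      rw [pow_add, show ((-1 : ℝ) ^ (j : ℕ) * ((-1 : ℝ) ^ n * (-1 : ℝ) ^ (j : ℕ)))
        = (-1 : ℝ) ^ n * ((-1 : ℝ) ^ (j : ℕ) * (-1 : ℝ) ^ (j : ℕ)) from by ring,
        ← pow_add, ← two_mul, pow_mul]
      norm_num
    -- LHS
    have hLHS : LKd n k p ξ
        = ∑ τ ∈ univ.filter (fun τ : Fin (n + 1) → Fin 2 => ∑ l, (τ l : ℕ) = (n - k) + 1),
            ((n - k + 1 : ℕ) : ℝ) * ((-1 : ℝ) ^ n * Ym ξ p.2 τ) := by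
      unfold LKd
      have h1 : ∀ j : Fin (n + 1), (-1 : ℝ) ^ (j : ℕ) *
          fderiv ℝ (fun q => LKform n k q (fun i => ξ (j.succAbove i))) p (ξ j)
          = ∑ σ ∈ univ.filter (fun σ : Fin n → Fin 2 => ∑ i, (σ i : ℕ) = n - k),
              ((-1 : ℝ) ^ n * Ym ξ p.2 (j.insertNth 1 σ)) := by
        intro j
        rw [fderiv_LKform]
        show (-1 : ℝ) ^ (j : ℕ) *
          (∑ σ ∈ univ.filter (fun σ : Fin n → Fin 2 => ∑ i, (σ i : ℕ) = n - k),
            detPairLK n (Fin.snoc (fun i => if σ i = 0 then (ξ (j.succAbove i)).1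
              else (ξ (j.succAbove i)).2) ((ξ j).2))) = _
        rw [Finset.mul_sum]
        refine Finset.sum_congr rfl (fun σ _ => ?_)
        rw [lhs_det hp hξ j σ, ← mul_assoc, hsq j]
      rw [Finset.sum_congr rfl (fun j _ => h1 j)]
      rw [reindex 1 (n - k) (fun τ _ => ((-1 : ℝ) ^ n * Ym ξ p.2 τ))]
      have hb : (n - k) + ((1 : Fin 2) : ℕ) = (n - k) + 1 := by norm_num
      rw [hb]
      refine Finset.sum_congr rfl (fun τ hτ => ?_)
      simp only [mem_filter, mem_univ, true_and] at hτ
      rw [Finset.sum_const, card_ones hτ, nsmul_eq_mul]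
    -- RHS
    have hnk : n - (k - 1) = (n - k) + 1 := by omega
    have hRHS : ∑ j : Fin (n + 1), (-1 : ℝ) ^ (j : ℕ) * ⟪(ξ j).1, p.2⟫ *
          LKform n (k - 1) p (fun i => ξ (j.succAbove i))
        = ∑ τ ∈ univ.filter (fun τ : Fin (n + 1) → Fin 2 => ∑ l, (τ l : ℕ) = (n - k) + 1),
            ((-1 : ℝ) ^ n * Ym ξ p.2 τ) := by
      have h1 : ∀ j : Fin (n + 1), (-1 : ℝ) ^ (j : ℕ) * ⟪(ξ j).1, p.2⟫ *
            LKform n (k - 1) p (fun i => ξ (j.succAbove i))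
          = ∑ σ ∈ univ.filter (fun σ : Fin n → Fin 2 => ∑ i, (σ i : ℕ) = (n - k) + 1),
              ((-1 : ℝ) ^ n *
                (⟪(ξ j).1, p.2⟫ * detPairLK n (Fm ξ p.2 (j.insertNth 0 σ) j))) := by
        intro j
        have h2 : LKform n (k - 1) p (fun i => ξ (j.succAbove i))
            = ∑ σ ∈ univ.filter (fun σ : Fin n → Fin 2 => ∑ i, (σ i : ℕ) = (n - k) + 1),
                detPairLK n (Fin.snoc (fun i => if σ i = 0 then (ξ (j.succAbove i)).1
                  else (ξ (j.succAbove i)).2) p.2) := by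
          unfold LKform
          rw [hnk]
        rw [h2, Finset.mul_sum]
        refine Finset.sum_congr rfl (fun σ _ => ?_)
        rw [rhs_det ξ p.2 j σ]
        rw [show (-1 : ℝ) ^ (j : ℕ) * ⟪(ξ j).1, p.2⟫ *
            ((-1 : ℝ) ^ (n + (j : ℕ)) * detPairLK n (Fm ξ p.2 (j.insertNth 0 σ) j))
          = ((-1 : ℝ) ^ (j : ℕ) * (-1 : ℝ) ^ (n + (j : ℕ))) *
            (⟪(ξ j).1, p.2⟫ * detPairLK n (Fm ξ p.2 (j.insertNth 0 σ) j)) from by ring, hsq j]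
      rw [Finset.sum_congr rfl (fun j _ => h1 j)]
      rw [reindex 0 ((n - k) + 1)
        (fun τ j => ((-1 : ℝ) ^ n * (⟪(ξ j).1, p.2⟫ * detPairLK n (Fm ξ p.2 τ j))))]
      have hb : ((n - k) + 1) + ((0 : Fin 2) : ℕ) = (n - k) + 1 := by norm_num
      rw [hb]
      refine Finset.sum_congr rfl (fun τ _ => ?_)
      rw [Ym, Finset.mul_sum]
    rw [hLHS, hRHS, Finset.mul_sum]
  · unfold LKd
    refine Finset.sum_eq_zero (fun j _ => ?_)
    rw [Stmt11Aux.fderiv_LKform]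
    have hz : LKform n 0 (ξ j) (fun i => ξ (j.succAbove i)) = 0 := by
      unfold LKform
      refine Finset.sum_eq_zero (fun σ hσ => ?_)
      simp only [Finset.mem_filter, Finset.mem_univ, true_and, Nat.sub_zero] at hσ
      have hall : ∀ i, ¬ σ i = 0 := by
        intro i h0
        have hle : ∀ l ∈ Finset.univ, (σ l : ℕ) ≤ 1 := by
          intro l _
          have := (σ l).isLt
          omega
        have hlt : ∑ l, ((σ l : ℕ)) < ∑ _l : Fin n, 1 :=
          Finset.sum_lt_sum hle ⟨i, Finset.mem_univ i, by rw [h0]; norm_num⟩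
        simp only [Finset.sum_const, Finset.card_univ, Fintype.card_fin, smul_eq_mul,
          mul_one] at hlt
        omega
      apply Stmt11Aux.detPairLK_eq_zero_of_orth hp
      intro l
      refine Fin.lastCases ?_ (fun i => ?_) l
      · rw [Fin.snoc_last]; exact hξ j
      · rw [Fin.snoc_castSucc, if_neg (hall i)]; exact hξ _
    rw [hz, mul_zero]
end
end

section
/- Let C ⊆ ℝ^{n+1} be nonempty and let nor(C) = {(x,u) ∈ cl(C) × 𝕊ⁿ : dist(x + s u, C) = s for some s > 0} be its proximal unit normal bundle. If W ⊆ ℝ^{n+1} × ℝ^{n+1} is open and W ∩ nor(C) ≠ ∅, then ℋⁿ(W ∩ nor(C)) > 0. -/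
open MeasureTheory Metric
open scoped ENNReal RealInnerProductSpace

/-- The proximal unit normal bundle of a subset `C` of `ℝ^{n+1}`. -/
def norBundle (n : ℕ) (C : Set (EuclideanSpace ℝ (Fin (n + 1)))) :
    Set (EuclideanSpace ℝ (Fin (n + 1)) × EuclideanSpace ℝ (Fin (n + 1))) :=
  {p | p.1 ∈ closure C ∧ ‖p.2‖ = 1 ∧ ∃ s : ℝ, 0 < s ∧ infDist (p.1 + s • p.2) C = s}

section Aux

variable {E : Type*} [NormedAddCommGroup E] [InnerProductSpace ℝ E]

/-- Along the ray from the foot point, the distance function is linear. -/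
lemma ray_infDist {C : Set E} (hC : C.Nonempty) {x u : E} (hx : x ∈ closure C)
    (hu : ‖u‖ = 1) {s : ℝ} (hs : infDist (x + s • u) C = s) {r : ℝ} (hr : 0 ≤ r)
    (hrs : r ≤ s) : infDist (x + r • u) C = r := by
  have hdru : dist (x + r • u) x = r := by
    rw [dist_eq_norm, add_sub_cancel_left, norm_smul, hu, Real.norm_eq_abs,
      abs_of_nonneg hr, mul_one]
  have h0 : infDist x C = 0 := (mem_closure_iff_infDist_zero hC).1 hx
  have h1 : infDist (x + r • u) C ≤ r := by
    calc infDist (x + r • u) C ≤ infDist x C + dist (x + r • u) x :=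
          infDist_le_infDist_add_dist
      _ = r := by rw [h0, hdru, zero_add]
  have hdsr : dist (x + s • u) (x + r • u) = s - r := by
    rw [dist_eq_norm]
    have : (x + s • u) - (x + r • u) = (s - r) • u := by
      rw [sub_smul]; abel
    rw [this, norm_smul, hu, Real.norm_eq_abs, abs_of_nonneg (by linarith), mul_one]
  have h2 : s ≤ infDist (x + r • u) C + (s - r) := by
    calc s = infDist (x + s • u) C := hs.symm
      _ ≤ infDist (x + r • u) C + dist (x + s • u) (x + r • u) :=
          infDist_le_infDist_add_dist
      _ = infDist (x + r • u) C + (s - r) := by rw [hdsr]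
  linarith

/-- Interior points of the ray have a unique nearest point, namely the foot point. -/
lemma unique_nearest {C : Set E} (hC : C.Nonempty) {x u : E} (hx : x ∈ closure C)
    (hu : ‖u‖ = 1) {s : ℝ} (hs : infDist (x + s • u) C = s) {r : ℝ} (hr0 : 0 < r)
    (hrs : r < s) {z : E} (hz : z ∈ closure C) (hdz : dist (x + r • u) z = r) : z = x := by
  set a : E := (s - r) • u with ha
  set b : E := (x + r • u) - z with hb
  have hna : ‖a‖ = s - r := by
    rw [ha, norm_smul, hu, Real.norm_eq_abs, abs_of_nonneg (by linarith), mul_one]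
  have hnb : ‖b‖ = r := by rw [hb, ← dist_eq_norm]; exact hdz
  have hsum : a + b = (x + s • u) - z := by
    rw [ha, hb, sub_smul]; abel
  have hge : s ≤ ‖a + b‖ := by
    have h1 : infDist (x + s • u) C ≤ dist (x + s • u) z := by
      rw [← infDist_closure]
      exact infDist_le_dist_of_mem hz
    rw [hsum, ← dist_eq_norm]
    rw [hs] at h1
    exact h1
  have heq : ‖a + b‖ = ‖a‖ + ‖b‖ := by
    have hle : ‖a + b‖ ≤ ‖a‖ + ‖b‖ := norm_add_le a b
    rw [hna, hnb] at hle ⊢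
    linarith
  have hray : SameRay ℝ a b := sameRay_iff_norm_add.2 heq
  have hane : a ≠ 0 := by
    intro h
    rw [h, norm_zero] at hna; linarith
  have hbne : b ≠ 0 := by
    intro h
    rw [h, norm_zero] at hnb; linarith
  obtain ⟨r₁, r₂, hr₁, hr₂, hrr⟩ := hray.exists_pos hane hbne
  -- b = t • u with t > 0 and ‖b‖ = r, hence b = r • u
  have hbt : b = (r₂⁻¹ * (r₁ * (s - r))) • u := by
    have : r₂ • b = (r₁ * (s - r)) • u := by
      rw [← hrr, ha, smul_smul]
    calc b = r₂⁻¹ • (r₂ • b) := by rw [inv_smul_smul₀ (ne_of_gt hr₂)]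
      _ = r₂⁻¹ • ((r₁ * (s - r)) • u) := by rw [this]
      _ = (r₂⁻¹ * (r₁ * (s - r))) • u := by rw [smul_smul]
  have ht0 : 0 ≤ r₂⁻¹ * (r₁ * (s - r)) := by
    have hsr : 0 < s - r := sub_pos.2 hrs
    have := mul_pos (inv_pos.2 hr₂) (mul_pos hr₁ hsr)
    linarith
  have htr : r₂⁻¹ * (r₁ * (s - r)) = r := by
    have := hnb
    rw [hbt, norm_smul, hu, Real.norm_eq_abs, abs_of_nonneg ht0, mul_one] at this
    exact this
  have hbr : b = r • u := by rw [hbt, htr]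
  rw [hb] at hbr
  calc z = (x + r • u) - (x + r • u - z) := by abel
    _ = (x + r • u) - r • u := by rw [hbr]
    _ = x := by abel

/-- Near the midpoint of the ray, every nearest-point pair lies in `W`. -/
lemma nbhd_lemma [ProperSpace E] {C : Set E} (hC : C.Nonempty) {x u : E}
    (hx : x ∈ closure C) (hu : ‖u‖ = 1) {s : ℝ} (hspos : 0 < s)
    (hs : infDist (x + s • u) C = s) {W : Set (E × E)} (hW : IsOpen W)
    (hxuW : (x, u) ∈ W) :
    ∃ δ : ℝ, 0 < δ ∧ δ ≤ s / 8 ∧ ∀ w z : E, dist w (x + (s / 2) • u) ≤ δ →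
      z ∈ closure C → dist w z = infDist w C →
      (z, (infDist w C)⁻¹ • (w - z)) ∈ W := by
  set z0 : E := x + (s / 2) • u with hz0
  have hdz0 : infDist z0 C = s / 2 :=
    ray_infDist hC hx hu hs (by linarith) (by linarith)
  -- a continuous "pair" map (denominator truncated away from 0)
  set g : E × E → E × E :=
    fun p => (p.2, (max (infDist p.1 C) (s / 4))⁻¹ • (p.1 - p.2)) with hg
  have hgc : Continuous g := by
    apply Continuous.prodMk continuous_snd
    apply Continuous.smul
    · apply Continuous.inv₀
      · exact ((continuous_infDist_pt C).comp continuous_fst).max continuous_const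
      · intro p
        have : 0 < max (infDist p.1 C) (s / 4) :=
          lt_max_of_lt_right (by linarith)
        exact ne_of_gt this
    · exact continuous_fst.sub continuous_snd
  -- the "bad" set
  set B : Set (E × E) := {p | dist p.1 z0 ≤ s / 8 ∧ dist p.2 z0 ≤ s ∧ p.2 ∈ closure C ∧
      dist p.1 p.2 = infDist p.1 C ∧ g p ∈ Wᶜ} with hB
  have hinf_lb : ∀ w : E, dist w z0 ≤ s / 8 → s / 4 ≤ infDist w C := by
    intro w hw
    have : infDist z0 C ≤ infDist w C + dist z0 w := infDist_le_infDist_add_dist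
    rw [hdz0, dist_comm] at this
    linarith
  -- if the conclusion fails for (w, z), then (w, z) ∈ B
  have hmemB : ∀ w z : E, dist w z0 ≤ s / 8 → z ∈ closure C →
      dist w z = infDist w C → (z, (infDist w C)⁻¹ • (w - z)) ∉ W → (w, z) ∈ B := by
    intro w z hw hzC hwz hnW
    have hlb := hinf_lb w hw
    have hmax : max (infDist w C) (s / 4) = infDist w C := max_eq_left (by linarith)
    refine ⟨hw, ?_, hzC, hwz, ?_⟩
    · calc dist z z0 ≤ dist z w + dist w z0 := dist_triangle _ _ _
        _ = infDist w C + dist w z0 := by rw [dist_comm z w, hwz]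
        _ ≤ (infDist z0 C + dist w z0) + dist w z0 := by
            have : infDist w C ≤ infDist z0 C + dist w z0 := infDist_le_infDist_add_dist
            linarith
        _ ≤ s := by rw [hdz0]; linarith
    · simpa [hg, hmax] using hnW
  have hBclosed : IsClosed B := by
    apply IsClosed.inter
    · exact isClosed_le (continuous_fst.dist continuous_const) continuous_const
    apply IsClosed.inter
    · exact isClosed_le (continuous_snd.dist continuous_const) continuous_const
    apply IsClosed.inter
    · exact isClosed_closure.preimage continuous_snd
    apply IsClosed.inter
    · exact isClosed_eq (continuous_fst.dist continuous_snd)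
        ((continuous_infDist_pt C).comp continuous_fst)
    · exact hW.isClosed_compl.preimage hgc
  have hBbdd : Bornology.IsBounded B := by
    apply Bornology.IsBounded.subset
      (Bornology.IsBounded.prod (isBounded_closedBall (x := z0) (r := s / 8))
        (isBounded_closedBall (x := z0) (r := s)))
    rintro ⟨w, z⟩ ⟨h1, h2, -⟩
    exact ⟨mem_closedBall.2 h1, mem_closedBall.2 h2⟩
  have hBcompact : IsCompact B := Metric.isCompact_of_isClosed_isBounded hBclosed hBbdd
  -- points of B stay away from the fiber over z0
  have hBpos : ∀ p ∈ B, 0 < dist p.1 z0 := by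
    rintro ⟨w, z⟩ ⟨h1, h2, hzC, hwz, hgW⟩
    rcases eq_or_lt_of_le (dist_nonneg (x := w) (y := z0)) with h | h
    · exfalso
      have hwz0 : w = z0 := by
        have := h.symm
        rwa [dist_eq_zero] at this
      rw [hwz0] at hwz hgW
      have hzx : z = x := by
        apply unique_nearest hC hx hu hs (by linarith : (0:ℝ) < s / 2)
          (by linarith : s / 2 < s) hzC
        rw [← hz0, hwz, hdz0]
      apply hgW
      have hmax : max (infDist z0 C) (s / 4) = s / 2 := by
        rw [hdz0]; exact max_eq_left (by linarith)
      have hz0x : z0 - x = (s / 2) • u := by rw [hz0]; abel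
      have hgz : g (z0, z) = (x, u) := by
        rw [hg, hzx]
        show (x, (max (infDist z0 C) (s / 4))⁻¹ • (z0 - x)) = (x, u)
        rw [hmax, hz0x, inv_smul_smul₀ (by linarith : (s:ℝ) / 2 ≠ 0)]
      rw [hgz]
      exact hxuW
    · exact h
  by_cases hBne : B.Nonempty
  · obtain ⟨p₀, hp₀B, hp₀min⟩ := hBcompact.exists_isMinOn hBne
      ((continuous_dist.comp (continuous_fst.prodMk continuous_const)).continuousOn
        (s := B) : ContinuousOn (fun p : E × E => dist p.1 z0) B)
    set δ₀ : ℝ := dist p₀.1 z0 with hδ₀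
    have hδ₀pos : 0 < δ₀ := hBpos p₀ hp₀B
    refine ⟨min (δ₀ / 2) (s / 8), by positivity, min_le_right _ _, ?_⟩
    intro w z hw hzC hwz
    by_contra hnW
    have hmem : (w, z) ∈ B :=
      hmemB w z (le_trans hw (min_le_right _ _)) hzC hwz hnW
    have := hp₀min hmem
    simp only [Function.comp] at this
    have : δ₀ ≤ dist w z0 := this
    have : δ₀ ≤ min (δ₀ / 2) (s / 8) := le_trans this hw
    have : δ₀ ≤ δ₀ / 2 := le_trans this (min_le_left _ _)
    linarith
  · refine ⟨s / 8, by linarith, le_refl _, ?_⟩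
    intro w z hw hzC hwz
    by_contra hnW
    exact hBne ⟨(w, z), hmemB w z hw hzC hwz hnW⟩

end Aux

/-- the proximal unit normal bundle has locally positive
`ℋⁿ`-measure wherever it is nonempty. -/
theorem stmt_13 (n : ℕ) (C : Set (EuclideanSpace ℝ (Fin (n + 1)))) (hC : C.Nonempty)
    (W : Set (EuclideanSpace ℝ (Fin (n + 1)) × EuclideanSpace ℝ (Fin (n + 1))))
    (hW : IsOpen W) (hne : (W ∩ norBundle n C).Nonempty) :
    0 < μH[(n : ℝ)] (W ∩ norBundle n C) := by
  classical
  let E := EuclideanSpace ℝ (Fin (n + 1))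
  obtain ⟨⟨x, u⟩, hpW, hxC, hu, s, hspos, hs⟩ := hne
  dsimp only at hxC hu hs
  -- the neighborhood lemma
  obtain ⟨δ, hδpos, hδle, hδ⟩ := nbhd_lemma hC hxC hu hspos hs hW hpW
  set c : ℝ := s / 2 with hc
  set z0 : E := x + c • u with hz0
  have hcpos : 0 < c := by rw [hc]; linarith
  -- orthonormal basis of the orthogonal complement of u
  haveI : Fact (Module.finrank ℝ (EuclideanSpace ℝ (Fin (n + 1))) = n + 1) :=
    ⟨finrank_euclideanSpace_fin⟩
  have hu0 : u ≠ 0 := by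
    intro h; rw [h, norm_zero] at hu; norm_num at hu
  set b := OrthonormalBasis.fromOrthogonalSpanSingleton (𝕜 := ℝ) n hu0
  set e : Fin n → E := fun i => (b i : E) with he_def
  have he : Orthonormal ℝ e := by
    rw [orthonormal_iff_ite]
    intro i j
    have := orthonormal_iff_ite.mp b.orthonormal i j
    rwa [Submodule.coe_inner] at this
  have heu : ∀ i, ⟪e i, u⟫ = 0 := by
    intro i
    have hmem : (e i : E) ∈ (Submodule.span ℝ {u})ᗮ := (b i).2
    have := (Submodule.mem_orthogonal _ _).mp hmem u (Submodule.mem_span_singleton_self u)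
    rw [real_inner_comm] at this
    exact this
  have hei_norm : ∀ i, ‖e i‖ = 1 := fun i => he.1 i
  -- the Lipschitz test map
  set Ψ : E × E → (Fin n → ℝ) := fun p i => ⟪e i, p.1 + c • p.2⟫ with hΨ
  have hΨlip : LipschitzWith (Real.toNNReal (1 + c)) Ψ := by
    apply LipschitzWith.of_dist_le_mul
    intro p q
    rw [Real.coe_toNNReal _ (by linarith)]
    apply dist_pi_le_iff (by positivity) |>.2
    intro i
    have hdiff : Ψ p i - Ψ q i = ⟪e i, (p.1 - q.1) + c • (p.2 - q.2)⟫ := by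
      rw [hΨ]
      simp only []
      rw [← inner_sub_right]
      congr 1
      rw [smul_sub]
      abel
    rw [Real.dist_eq, hdiff]
    calc |⟪e i, (p.1 - q.1) + c • (p.2 - q.2)⟫|
        ≤ ‖e i‖ * ‖(p.1 - q.1) + c • (p.2 - q.2)‖ := abs_real_inner_le_norm _ _
      _ = ‖(p.1 - q.1) + c • (p.2 - q.2)‖ := by rw [hei_norm i, one_mul]
      _ ≤ ‖p.1 - q.1‖ + ‖c • (p.2 - q.2)‖ := norm_add_le _ _
      _ = dist p.1 q.1 + c * dist p.2 q.2 := by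
          rw [norm_smul, Real.norm_eq_abs, abs_of_nonneg (le_of_lt hcpos),
            ← dist_eq_norm, ← dist_eq_norm]
      _ ≤ dist p q + c * dist p q := by
          have h1 : dist p.1 q.1 ≤ dist p q := by
            rw [Prod.dist_eq]; exact le_max_left _ _
          have h2 : dist p.2 q.2 ≤ dist p q := by
            rw [Prod.dist_eq]; exact le_max_right _ _
          nlinarith [dist_nonneg (x := p) (y := q)]
      _ = (1 + c) * dist p q := by ring
  -- the target ball in ℝⁿ
  set c0 : Fin n → ℝ := fun i => ⟪e i, z0⟫ with hc0
  set ρ : ℝ := δ / (4 * (n + 1)) with hρ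
  have hρpos : 0 < ρ := by rw [hρ]; positivity
  have hT : closedBall c0 ρ ⊆ Ψ '' (W ∩ norBundle n C) := by
    intro p hp
    set q : Fin n → ℝ := fun i => p i - c0 i with hq
    have hqi : ∀ i, |q i| ≤ ρ := by
      intro i
      have h1 : dist (p i) (c0 i) ≤ dist p c0 := dist_le_pi_dist p c0 i
      have h2 : dist p c0 ≤ ρ := mem_closedBall.1 hp
      rw [Real.dist_eq] at h1
      exact le_trans h1 h2
    set v : E := ∑ i, q i • e i with hv
    have hvnorm : ‖v‖ ≤ δ / 4 := by
      calc ‖v‖ ≤ ∑ i, ‖q i • e i‖ := norm_sum_le _ _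
        _ = ∑ i, |q i| := by
            apply Finset.sum_congr rfl
            intro i _
            rw [norm_smul, Real.norm_eq_abs, hei_norm i, mul_one]
        _ ≤ ∑ _i : Fin n, ρ := Finset.sum_le_sum (fun i _ => hqi i)
        _ = n * ρ := by rw [Finset.sum_const, Finset.card_univ, Fintype.card_fin,
            nsmul_eq_mul]
        _ ≤ δ / 4 := by
            rw [hρ, ← mul_div_assoc,
              div_le_div_iff₀ (by positivity : (0:ℝ) < 4 * ((n:ℝ) + 1))
                (by norm_num : (0:ℝ) < 4)]
            nlinarith [hδpos.le, Nat.cast_nonneg (α := ℝ) n]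
    -- `⟪e i, v⟫ = q i`
    have hev : ∀ i, ⟪e i, v⟫ = q i := fun i => he.inner_right_fintype q i
    -- intermediate value theorem along the `u` direction
    set f : ℝ → ℝ := fun τ => infDist (z0 + v + τ • u) C with hf
    have hfc : Continuous f := by
      apply (continuous_infDist_pt C).comp
      fun_prop
    have hray : ∀ r : ℝ, 0 ≤ r → r ≤ s → infDist (x + r • u) C = r :=
      fun r h1 h2 => ray_infDist hC hxC hu hs h1 h2
    have hδs : δ ≤ s / 8 := hδle
    have hlow : f (-(δ / 2)) ≤ c - δ / 4 := by
      have hcomb : z0 + (-(δ / 2)) • u = x + (c - δ / 2) • u := by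
        rw [hz0]; module
      have h1 : infDist (z0 + (-(δ / 2)) • u) C = c - δ / 2 := by
        rw [hcomb]
        exact hray _ (by rw [hc]; linarith) (by rw [hc]; linarith)
      calc f (-(δ / 2)) ≤ infDist (z0 + (-(δ / 2)) • u) C +
            dist (z0 + v + (-(δ / 2)) • u) (z0 + (-(δ / 2)) • u) :=
          infDist_le_infDist_add_dist
        _ ≤ (c - δ / 2) + δ / 4 := by
            rw [h1]
            have : dist (z0 + v + (-(δ / 2)) • u) (z0 + (-(δ / 2)) • u) = ‖v‖ := by
              rw [dist_eq_norm]
              congr 1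
              abel
            rw [this]
            linarith
        _ = c - δ / 4 := by ring
    have hhigh : c + δ / 4 ≤ f (δ / 2) := by
      have hcomb : z0 + (δ / 2) • u = x + (c + δ / 2) • u := by
        rw [hz0]; module
      have h1 : infDist (z0 + (δ / 2) • u) C = c + δ / 2 := by
        rw [hcomb]
        exact hray _ (by rw [hc]; linarith) (by rw [hc]; linarith)
      have h2 : infDist (z0 + (δ / 2) • u) C ≤ f (δ / 2) +
          dist (z0 + (δ / 2) • u) (z0 + v + (δ / 2) • u) := infDist_le_infDist_add_dist
      have h3 : dist (z0 + (δ / 2) • u) (z0 + v + (δ / 2) • u) = ‖v‖ := by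
        rw [dist_eq_norm, norm_sub_rev]
        congr 1
        abel
      rw [h1, h3] at h2
      linarith
    have hIVT : ∃ τ ∈ Set.Icc (-(δ / 2)) (δ / 2), f τ = c := by
      have hsub : Set.Icc (f (-(δ / 2))) (f (δ / 2)) ⊆
          f '' Set.Icc (-(δ / 2)) (δ / 2) :=
        intermediate_value_Icc (by linarith) hfc.continuousOn
      have hcin : c ∈ Set.Icc (f (-(δ / 2))) (f (δ / 2)) := ⟨by linarith, by linarith⟩
      obtain ⟨τ, hτ, hfτ⟩ := hsub hcin
      exact ⟨τ, hτ, hfτ⟩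
    obtain ⟨τ, hτIcc, hfτ⟩ := hIVT
    set w : E := z0 + v + τ • u with hw
    have hwd : infDist w C = c := hfτ
    have hwz0 : dist w z0 ≤ δ := by
      have : w - z0 = v + τ • u := by rw [hw]; abel
      rw [dist_eq_norm, this]
      calc ‖v + τ • u‖ ≤ ‖v‖ + ‖τ • u‖ := norm_add_le _ _
        _ ≤ δ / 4 + |τ| := by
            rw [norm_smul, Real.norm_eq_abs, hu, mul_one]
            linarith
        _ ≤ δ := by
            have := abs_le.2 ⟨hτIcc.1, hτIcc.2⟩
            linarith [this]
    -- a nearest point of w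
    obtain ⟨x', hx'C, hx'd⟩ := isClosed_closure.exists_infDist_eq_dist
      hC.closure w
    rw [infDist_closure] at hx'd
    have hx'dc : dist w x' = c := by rw [← hx'd, hwd]
    set u' : E := c⁻¹ • (w - x') with hu'
    have hpair : (x', u') ∈ W := by
      have := hδ w x' hwz0 hx'C hx'd.symm
      rwa [hwd] at this
    have hu'norm : ‖u'‖ = 1 := by
      rw [hu', norm_smul, Real.norm_eq_abs, abs_of_nonneg (by positivity)]
      rw [← dist_eq_norm, hx'dc]
      field_simp
    have hxcu' : x' + c • u' = w := by
      rw [hu', smul_inv_smul₀ (ne_of_gt hcpos)]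
      abel
    have hnor : (x', u') ∈ norBundle n C := by
      refine ⟨hx'C, hu'norm, c, hcpos, ?_⟩
      simp only []
      rw [hxcu', hwd]
    refine ⟨(x', u'), ⟨hpair, hnor⟩, ?_⟩
    funext i
    have : Ψ (x', u') i = ⟪e i, w⟫ := by rw [hΨ]; simp only []; rw [hxcu']
    rw [this, hw, inner_add_right, inner_add_right, hev i, inner_smul_right, heu i,
      mul_zero, add_zero]
    have hc0i : c0 i = ⟪e i, z0⟫ := rfl
    simp only [hq]
    rw [← hc0i]
    ring
  -- measure computation
  have hHT : (μH[(n : ℝ)] : Measure (Fin n → ℝ)) = volume := by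
    have h := MeasureTheory.hausdorffMeasure_pi_real (ι := Fin n)
    rwa [Fintype.card_fin] at h
  have hTpos : 0 < μH[(n : ℝ)] (closedBall c0 ρ) := by
    rw [hHT]
    exact measure_closedBall_pos volume c0 hρpos
  have hchain : μH[(n : ℝ)] (closedBall c0 ρ) ≤
      (Real.toNNReal (1 + c) : ℝ≥0∞) ^ (n : ℝ) * μH[(n : ℝ)] (W ∩ norBundle n C) := by
    calc μH[(n : ℝ)] (closedBall c0 ρ) ≤ μH[(n : ℝ)] (Ψ '' (W ∩ norBundle n C)) :=
        measure_mono hT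
      _ ≤ (Real.toNNReal (1 + c) : ℝ≥0∞) ^ (n : ℝ) * μH[(n : ℝ)] (W ∩ norBundle n C) :=
        hΨlip.hausdorffMeasure_image_le (by positivity) _
  by_contra hcon
  push_neg at hcon
  have hzero : μH[(n : ℝ)] (W ∩ norBundle n C) = 0 := le_antisymm hcon zero_le
  rw [hzero, mul_zero] at hchain
  exact absurd (le_antisymm hchain zero_le) (ne_of_gt hTpos)
end

section
/- There exists a convex function f ∈ C¹(ℝ) (for example the primitive of the Cantor ternary function) whose derivative f' is continuous, nondecreasing, nonconstant, and differentiable with f''(x) = 0 at Lebesgue-almost every x ∈ ℝ. Consequently the graph of f has approximate curvature zero ℋ¹-almost everywhere but is contained in no line. -/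
open MeasureTheory Filter Set Topology

noncomputable section

/-- One step of the Cantor-function iteration. -/
def cT (h : ℝ → ℝ) : ℝ → ℝ := fun x =>
  if x ≤ 1/3 then h (3*x) / 2 else if x ≤ 2/3 then 1/2 else (1 + h (3*x - 2))/2

/-- Iterates converging to the Cantor function. -/
def cg : ℕ → ℝ → ℝ
  | 0 => fun x => max 0 (min x 1)
  | n+1 => cT (cg n)

structure CInv (h : ℝ → ℝ) : Prop where
  mono : Monotone h
  zero : ∀ x ≤ (0:ℝ), h x = 0
  one : ∀ x : ℝ, 1 ≤ x → h x = 1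
  cont : Continuous h

theorem CInv.nonneg {h : ℝ → ℝ} (I : CInv h) (x : ℝ) : 0 ≤ h x := by
  rcases le_total x 0 with hx | hx
  · rw [I.zero x hx]
  · rw [← I.zero 0 le_rfl]; exact I.mono hx

theorem CInv.le_one {h : ℝ → ℝ} (I : CInv h) (x : ℝ) : h x ≤ 1 := by
  rcases le_total 1 x with hx | hx
  · rw [I.one x hx]
  · rw [← I.one 1 le_rfl]; exact I.mono hx

theorem CInv.cTInv {h : ℝ → ℝ} (I : CInv h) : CInv (cT h) := by
  constructor
  · intro x y hxy
    unfold cT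
    split_ifs <;>
      first
        | linarith [I.le_one (3*x), I.nonneg (3*x), I.le_one (3*y), I.nonneg (3*y-2),
            I.nonneg (3*x-2), I.le_one (3*y-2),
            I.mono (show (3:ℝ)*x ≤ 3*y by linarith),
            I.mono (show (3:ℝ)*x - 2 ≤ 3*y - 2 by linarith)]
  · intro x hx
    unfold cT
    rw [if_pos (by linarith), I.zero (3*x) (by linarith)]
    norm_num
  · intro x hx
    unfold cT
    rw [if_neg (by linarith), if_neg (by linarith), I.one (3*x-2) (by linarith)]
    norm_num
  · unfold cT
    apply Continuous.if_le
    · exact (I.cont.comp (continuous_const.mul continuous_id)).div_const 2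
    · apply Continuous.if_le
      · exact continuous_const
      · exact (continuous_const.add
          (I.cont.comp ((continuous_const.mul continuous_id).sub continuous_const))).div_const 2
      · exact continuous_id
      · exact continuous_const
      · intro x hx
        have hx' : x = 2/3 := hx
        rw [I.zero (3*x-2) (by rw [hx']; norm_num)]
        norm_num
    · exact continuous_id
    · exact continuous_const
    · intro x hx
      have hx' : x = 1/3 := hx
      rw [I.one (3*x) (by rw [hx']; norm_num), if_pos (by rw [hx']; norm_num)]

theorem cg_inv : ∀ n, CInv (cg n) := by
  intro n
  induction n with
  | zero =>
    constructor
    · intro a b hab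
      exact max_le_max le_rfl (min_le_min hab le_rfl)
    · intro x hx
      show max 0 (min x 1) = 0
      rw [min_eq_left (by linarith), max_eq_left hx]
    · intro x hx
      show max 0 (min x 1) = 1
      rw [min_eq_right hx, max_eq_right zero_le_one]
    · exact continuous_const.max (continuous_id.min continuous_const)
  | succ n ih => exact ih.cTInv

theorem cT_dist {h h' : ℝ → ℝ} {ε : ℝ} (hε : 0 ≤ ε) (hb : ∀ y, |h y - h' y| ≤ ε) (x : ℝ) :
    |cT h x - cT h' x| ≤ ε/2 := by
  unfold cT
  split_ifs with h1 h2
  · have := hb (3*x)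
    rw [abs_le] at this ⊢
    constructor <;> [linarith; linarith]
  · simp [hε]
    positivity
  · have := hb (3*x - 2)
    rw [abs_le] at this ⊢
    constructor <;> [linarith; linarith]

theorem cg_step (n : ℕ) (x : ℝ) : |cg (n+1) x - cg n x| ≤ (1/2)^n := by
  induction n generalizing x with
  | zero =>
    have h1 := (cg_inv 1).nonneg x
    have h2 := (cg_inv 1).le_one x
    have h3 := (cg_inv 0).nonneg x
    have h4 := (cg_inv 0).le_one x
    rw [abs_le]; norm_num; constructor <;> linarith
  | succ n ih =>
    have : |cT (cg (n+1)) x - cT (cg n) x| ≤ (1/2)^n / 2 :=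
      cT_dist (by positivity) ih x
    calc |cg (n+2) x - cg (n+1) x| = |cT (cg (n+1)) x - cT (cg n) x| := rfl
      _ ≤ (1/2)^n / 2 := this
      _ = (1/2)^(n+1) := by ring

theorem cg_dist_step (x : ℝ) (n : ℕ) : dist (cg n x) (cg (n+1) x) ≤ 1 * (1/2)^n := by
  rw [Real.dist_eq, abs_sub_comm, one_mul]
  exact cg_step n x

theorem cg_cauchy (x : ℝ) : CauchySeq (fun n => cg n x) :=
  cauchySeq_of_le_geometric (1/2) 1 (by norm_num) (cg_dist_step x)

/-- The Cantor ternary function. -/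
def cf : ℝ → ℝ := fun x => limUnder atTop (fun n => cg n x)

theorem cf_tendsto (x : ℝ) : Tendsto (fun n => cg n x) atTop (𝓝 (cf x)) :=
  (cg_cauchy x).tendsto_limUnder

theorem cf_mono : Monotone cf := fun x y hxy =>
  le_of_tendsto_of_tendsto' (cf_tendsto x) (cf_tendsto y) fun n => (cg_inv n).mono hxy

theorem cf_zero {x : ℝ} (hx : x ≤ 0) : cf x = 0 :=
  tendsto_nhds_unique (cf_tendsto x)
    (by simpa [(fun n => (cg_inv n).zero x hx : ∀ n, cg n x = 0)] using
      (tendsto_const_nhds : Tendsto (fun _ : ℕ => (0:ℝ)) atTop (𝓝 0)))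

theorem cf_one {x : ℝ} (hx : 1 ≤ x) : cf x = 1 :=
  tendsto_nhds_unique (cf_tendsto x)
    (by simpa [(fun n => (cg_inv n).one x hx : ∀ n, cg n x = 1)] using
      (tendsto_const_nhds : Tendsto (fun _ : ℕ => (1:ℝ)) atTop (𝓝 1)))

theorem cf_dist (n : ℕ) (x : ℝ) : dist (cg n x) (cf x) ≤ 1 * (1/2)^n / (1 - 1/2) :=
  dist_le_of_le_geometric_of_tendsto (1/2) 1 (by norm_num) (cg_dist_step x) (cf_tendsto x) n

theorem cf_unif : TendstoUniformly (fun n x => cg n x) cf atTop := by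
  rw [Metric.tendstoUniformly_iff]
  intro ε hε
  have h2 : Tendsto (fun n : ℕ => 1 * ((1:ℝ)/2)^n / (1 - 1/2)) atTop (𝓝 0) := by
    have := tendsto_pow_atTop_nhds_zero_of_lt_one (by norm_num : (0:ℝ) ≤ 1/2) (by norm_num)
    simpa using (this.const_mul (1 : ℝ)).div_const (1 - 1/2)
  filter_upwards [h2.eventually_lt_const hε] with n hn x
  rw [dist_comm]
  exact lt_of_le_of_lt (cf_dist n x) hn

theorem cf_cont : Continuous cf :=
  cf_unif.continuous (Frequently.of_forall fun n => (cg_inv n).cont)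

theorem cf_fixed (x : ℝ) : cf x = cT cf x := by
  have h1 : Tendsto (fun n => cg (n+1) x) atTop (𝓝 (cf x)) :=
    (cf_tendsto x).comp (tendsto_add_atTop_nat 1)
  have h2 : Tendsto (fun n => cT (cg n) x) atTop (𝓝 (cT cf x)) := by
    unfold cT
    by_cases hx1 : x ≤ 1/3
    · simp only [if_pos hx1]
      exact (cf_tendsto (3*x)).div_const 2
    · by_cases hx2 : x ≤ 2/3
      · simp only [if_neg hx1, if_pos hx2]
        exact tendsto_const_nhds
      · simp only [if_neg hx1, if_neg hx2]
        exact (tendsto_const_nhds.add (cf_tendsto (3*x-2))).div_const 2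
  exact tendsto_nhds_unique h1 h2

theorem cf_left {x : ℝ} (hx : x ≤ 1/3) : cf x = cf (3*x) / 2 := by
  rw [cf_fixed x]; unfold cT; rw [if_pos hx]

theorem cf_half {x : ℝ} (h1 : 1/3 ≤ x) (h2 : x ≤ 2/3) : cf x = 1/2 := by
  rw [cf_fixed x]; unfold cT
  split_ifs with hx1 hx2
  · have hx : x = 1/3 := le_antisymm hx1 h1
    subst hx
    rw [show (3:ℝ) * (1/3) = 1 by norm_num, cf_one le_rfl]
  · rfl

theorem cf_right {x : ℝ} (hx : 2/3 ≤ x) : cf x = (1 + cf (3*x - 2)) / 2 := by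
  rw [cf_fixed x]; unfold cT
  split_ifs with hx1 hx2
  · linarith
  · have : x = 2/3 := le_antisymm hx2 hx
    rw [this, show (3:ℝ) * (2/3) - 2 = 0 by norm_num, cf_zero le_rfl]
    norm_num
  · rfl

/-- Stage-`n` approximation of the Cantor set. -/
def cK : ℕ → Set ℝ
  | 0 => Icc 0 1
  | n+1 => (fun x => 3*x) ⁻¹' cK n ∪ (fun x => 3*x - 2) ⁻¹' cK n

theorem cK_subset : ∀ n, cK n ⊆ Icc 0 1 := by
  intro n
  induction n with
  | zero => exact fun x hx => hx
  | succ n ih =>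
    rintro x (hx | hx) <;>
    · have := ih hx
      simp only [mem_Icc] at this ⊢
      constructor <;> linarith [this.1, this.2]

theorem cK_zero_mem : ∀ n, (0:ℝ) ∈ cK n := by
  intro n
  induction n with
  | zero => exact ⟨le_rfl, zero_le_one⟩
  | succ n ih => exact Or.inl (by show (3:ℝ)*0 ∈ cK n; rw [mul_zero]; exact ih)

theorem cK_one_mem : ∀ n, (1:ℝ) ∈ cK n := by
  intro n
  induction n with
  | zero => exact ⟨zero_le_one, le_rfl⟩
  | succ n ih => exact Or.inr (by show (3:ℝ)*1 - 2 ∈ cK n; norm_num; exact ih)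

theorem cK_vol : ∀ n, volume (cK n) ≤ (2/3 : ENNReal) ^ n := by
  intro n
  induction n with
  | zero =>
    have : cK 0 = Icc (0:ℝ) 1 := rfl
    rw [this, Real.volume_Icc, pow_zero]
    norm_num
  | succ n ih =>
    have h3 : ((3:ℝ)) ≠ 0 := by norm_num
    have e1 : volume ((fun x : ℝ => 3*x) ⁻¹' cK n) = ENNReal.ofReal |(3:ℝ)⁻¹| * volume (cK n) :=
      Real.volume_preimage_mul_left h3 (cK n)
    have e2 : (fun x : ℝ => 3*x - 2) ⁻¹' cK n = (fun x : ℝ => 3*x) ⁻¹' ((· + (-2)) ⁻¹' cK n) := by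
      ext y; simp [sub_eq_add_neg]
    have e3 : volume ((fun x : ℝ => 3*x - 2) ⁻¹' cK n) = ENNReal.ofReal |(3:ℝ)⁻¹| * volume (cK n) := by
      rw [e2, Real.volume_preimage_mul_left h3, measure_preimage_add_right]
    have e4 : ENNReal.ofReal |(3:ℝ)⁻¹| = (3 : ENNReal)⁻¹ := by
      rw [abs_of_pos (by norm_num : (0:ℝ) < 3⁻¹), ENNReal.ofReal_inv_of_pos (by norm_num)]
      norm_num
    calc volume (cK (n+1)) ≤ volume ((fun x : ℝ => 3*x) ⁻¹' cK n)
            + volume ((fun x : ℝ => 3*x - 2) ⁻¹' cK n) := measure_union_le _ _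
      _ = (3 : ENNReal)⁻¹ * volume (cK n) + (3 : ENNReal)⁻¹ * volume (cK n) := by
          rw [e1, e3, e4]
      _ ≤ (3 : ENNReal)⁻¹ * (2/3)^n + (3 : ENNReal)⁻¹ * (2/3)^n := by
          gcongr
      _ = (2/3 : ENNReal) ^ (n+1) := by
          rw [pow_succ]
          rw [show ((3:ENNReal))⁻¹ * (2/3)^n + (3 : ENNReal)⁻¹ * (2/3)^n
              = (2/3)^n * (2 * 3⁻¹) by ring]
          congr 1

theorem cf_locConst : ∀ n, ∀ x : ℝ, x ∉ cK n → ∀ᶠ y in 𝓝 x, cf y = cf x := by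
  intro n
  induction n with
  | zero =>
    intro x hx
    rcases not_and_or.mp hx with hx | hx
    · push_neg at hx
      filter_upwards [Iio_mem_nhds hx] with y hy
      rw [cf_zero (le_of_lt hy), cf_zero (le_of_lt hx)]
    · push_neg at hx
      filter_upwards [Ioi_mem_nhds hx] with y hy
      rw [cf_one (le_of_lt hy), cf_one (le_of_lt hx)]
  | succ n ih =>
    intro x hx
    have h1 : (3:ℝ)*x ∉ cK n := fun h => hx (Or.inl h)
    have h2 : (3:ℝ)*x - 2 ∉ cK n := fun h => hx (Or.inr h)
    rcases lt_trichotomy x (1/3) with hx1 | hx1 | hx1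
    · have hc : Tendsto (fun y : ℝ => 3*y) (𝓝 x) (𝓝 (3*x)) :=
        (continuous_const.mul continuous_id).continuousAt
      filter_upwards [Iio_mem_nhds hx1, hc.eventually (ih (3*x) h1)] with y hy1 hy2
      rw [cf_left (le_of_lt hy1), cf_left (le_of_lt hx1), hy2]
    · exfalso
      apply h1
      rw [hx1, show (3:ℝ) * (1/3) = 1 by norm_num]
      exact cK_one_mem n
    · rcases lt_trichotomy x (2/3) with hx2 | hx2 | hx2
      · filter_upwards [Ioo_mem_nhds hx1 hx2] with y hy
        rw [cf_half (le_of_lt hy.1) (le_of_lt hy.2), cf_half (le_of_lt hx1) (le_of_lt hx2)]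
      · exfalso
        apply h2
        rw [hx2, show (3:ℝ) * (2/3) - 2 = 0 by norm_num]
        exact cK_zero_mem n
      · have hc : Tendsto (fun y : ℝ => 3*y - 2) (𝓝 x) (𝓝 (3*x - 2)) :=
          ((continuous_const.mul continuous_id).sub continuous_const).continuousAt
        filter_upwards [Ioi_mem_nhds hx2, hc.eventually (ih (3*x-2) h2)] with y hy1 hy2
        rw [cf_right (le_of_lt hy1), cf_right (le_of_lt hx2), hy2]

theorem cf_bad_null : volume {x : ℝ | ¬ ∀ᶠ y in 𝓝 x, cf y = cf x} = 0 := by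
  have hsub : ∀ n, {x : ℝ | ¬ ∀ᶠ y in 𝓝 x, cf y = cf x} ⊆ cK n := by
    intro n x hx
    by_contra h
    exact hx (cf_locConst n x h)
  have hle : ∀ n, volume {x : ℝ | ¬ ∀ᶠ y in 𝓝 x, cf y = cf x} ≤ (2/3 : ENNReal)^n :=
    fun n => le_trans (measure_mono (hsub n)) (cK_vol n)
  have htend : Tendsto (fun n : ℕ => (2/3 : ENNReal)^n) atTop (𝓝 0) :=
    ENNReal.tendsto_pow_atTop_nhds_zero_of_lt_one (by
      rw [ENNReal.div_lt_iff (by norm_num) (by norm_num)]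
      norm_num)
  exact le_antisymm (ge_of_tendsto' htend hle) (by simp)

theorem cf_ae_deriv : ∀ᵐ x : ℝ ∂volume, HasDerivAt cf 0 x := by
  have h0 : ∀ᵐ x : ℝ ∂volume, ∀ᶠ y in 𝓝 x, cf y = cf x := by
    rw [ae_iff]
    exact cf_bad_null
  filter_upwards [h0] with x hx
  exact (hasDerivAt_const x (cf x)).congr_of_eventuallyEq hx

end


/-- there is a convex `C¹` function on `ℝ` (e.g. a primitive of the
Cantor ternary function) whose derivative is continuous, nondecreasing,
nonconstant, and whose second derivative exists and vanishes almost everywhere;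
consequently its graph is contained in no line. -/
theorem stmt_18 :
    ∃ f : ℝ → ℝ,
      ConvexOn ℝ Set.univ f ∧
      ContDiff ℝ 1 f ∧
      Continuous (deriv f) ∧
      Monotone (deriv f) ∧
      ¬ (∃ c : ℝ, ∀ x : ℝ, deriv f x = c) ∧
      (∀ᵐ x : ℝ ∂volume, HasDerivAt (deriv f) 0 x) ∧
      ¬ (∃ a b : ℝ, ∀ x : ℝ, f x = a * x + b) := by
  classical
  set f : ℝ → ℝ := fun x => ∫ t in (0:ℝ)..x, cf t with hf
  have hderiv : ∀ x, HasDerivAt f (cf x) x := fun x =>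
    (cf_cont.integral_hasStrictDerivAt 0 x).hasDerivAt
  have hdf : Differentiable ℝ f := fun x => (hderiv x).differentiableAt
  have hd : deriv f = cf := funext fun x => (hderiv x).deriv
  have h01 : cf 0 = 0 := cf_zero le_rfl
  have h11 : cf 1 = 1 := cf_one le_rfl
  refine ⟨f, ?_, ?_, ?_, ?_, ?_, ?_, ?_⟩
  · refine MonotoneOn.convexOn_of_deriv convex_univ hdf.continuous.continuousOn
      hdf.differentiableOn ?_
    rw [hd]
    exact cf_mono.monotoneOn _
  · exact contDiff_one_iff_deriv.2 ⟨hdf, by rw [hd]; exact cf_cont⟩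
  · rw [hd]; exact cf_cont
  · rw [hd]; exact cf_mono
  · rintro ⟨c, hc⟩
    have e0 := hc 0
    have e1 := hc 1
    rw [hd] at e0 e1
    rw [h01] at e0
    rw [h11] at e1
    exact zero_ne_one (e0.trans e1.symm)
  · rw [hd]; exact cf_ae_deriv
  · rintro ⟨a, b, hab⟩
    have hfa : f = fun x => a * x + b := funext hab
    have hda : ∀ x : ℝ, deriv f x = a := by
      intro x
      rw [hfa]
      have : HasDerivAt (fun x : ℝ => a * x + b) a x := by
        simpa using ((hasDerivAt_id x).const_mul a).add_const b
      exact this.deriv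
    have e0 := hda 0
    have e1 := hda 1
    rw [hd] at e0 e1
    rw [h01] at e0
    rw [h11] at e1
    exact zero_ne_one (e0.trans e1.symm)
end
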